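/- Suppose that T̃ is firmly nonexpansive. Let u0 ∈ H, and suppose û₁ ∈ Fix T and û₂ ∈ Fix T are both M-projections of u0 onto Fix T, i.e., for i ∈ {1,2}, ‖C*(u0 − ûᵢ)‖ ≤ ‖C*(u0 − x)‖ for all x ∈ Fix T. Then û₁ = û₂. -/

import Mathlib

set_option maxHeartbeats 1000000


open scoped RealInnerProductSpace

/-- If `T̃ = C* ∘ J ∘ C` is firmly nonexpansive, then `M`-projections of `u0` onto `Fix T`
are unique. -/
theorem stmt_4
    {H D : Type*} [NormedAddCommGroup H] [InnerProductSpace ℝ H] [CompleteSpace H]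
    [NormedAddCommGroup D] [InnerProductSpace ℝ D] [CompleteSpace D]
    (C : D →L[ℝ] H) (J : H → H)
    (hfne : ∀ v w : D,
      ‖ContinuousLinearMap.adjoint C (J (C v)) - ContinuousLinearMap.adjoint C (J (C w))‖ ^ 2 ≤
        ⟪v - w, ContinuousLinearMap.adjoint C (J (C v)) -
          ContinuousLinearMap.adjoint C (J (C w))⟫)
    (u0 u1 u2 : H)
    (h1fix : J (C (ContinuousLinearMap.adjoint C u1)) = u1)
    (h2fix : J (C (ContinuousLinearMap.adjoint C u2)) = u2)
    (h1 : ∀ x : H, J (C (ContinuousLinearMap.adjoint C x)) = x →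
      ‖ContinuousLinearMap.adjoint C (u0 - u1)‖ ≤ ‖ContinuousLinearMap.adjoint C (u0 - x)‖)
    (h2 : ∀ x : H, J (C (ContinuousLinearMap.adjoint C x)) = x →
      ‖ContinuousLinearMap.adjoint C (u0 - u2)‖ ≤ ‖ContinuousLinearMap.adjoint C (u0 - x)‖) :
    u1 = u2 := by
  set A := ContinuousLinearMap.adjoint C with hA
  set F : D → D := fun w => A (J (C w)) with hF
  -- F is nonexpansive
  have hne : ∀ v w : D, ‖F v - F w‖ ≤ ‖v - w‖ := by
    intro v w
    have h := hfne v w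
    have cs := real_inner_le_norm (v - w) (F v - F w)
    have hn1 : (0:ℝ) ≤ ‖F v - F w‖ := norm_nonneg _
    have hn2 : (0:ℝ) ≤ ‖v - w‖ := norm_nonneg _
    nlinarith [h, cs, hn1, hn2]
  -- fixed points
  have hw1 : F (A u1) = A u1 := by simp [hF, h1fix]
  have hw2 : F (A u2) = A u2 := by simp [hF, h2fix]
  set w1 := A u1
  set w2 := A u2
  set m : D := (2:ℝ)⁻¹ • (w1 + w2) with hm
  -- the midpoint is a fixed point of F
  have hmw1 : ‖m - w1‖ = ‖w1 - w2‖ / 2 := by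
    have : m - w1 = (2:ℝ)⁻¹ • (w2 - w1) := by
      rw [hm]; module
    rw [this, norm_smul, norm_sub_rev]
    simp
    ring
  have hmw2 : ‖m - w2‖ = ‖w1 - w2‖ / 2 := by
    have : m - w2 = (2:ℝ)⁻¹ • (w1 - w2) := by
      rw [hm]; module
    rw [this, norm_smul]
    simp
    ring
  have hFm1 : ‖F m - w1‖ ≤ ‖w1 - w2‖ / 2 := by
    calc ‖F m - w1‖ = ‖F m - F w1‖ := by rw [hw1]
    _ ≤ ‖m - w1‖ := hne m w1
    _ = ‖w1 - w2‖ / 2 := hmw1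
  have hFm2 : ‖F m - w2‖ ≤ ‖w1 - w2‖ / 2 := by
    calc ‖F m - w2‖ = ‖F m - F w2‖ := by rw [hw2]
    _ ≤ ‖m - w2‖ := hne m w2
    _ = ‖w1 - w2‖ / 2 := hmw2
  have hFm : F m = m := by
    have hpar := parallelogram_law_with_norm ℝ (F m - w1) (F m - w2)
    have e1 : (F m - w1) + (F m - w2) = (2:ℝ) • (F m - m) := by
      rw [hm]; module
    have e2 : (F m - w1) - (F m - w2) = w2 - w1 := by abel
    rw [e1, e2, norm_smul] at hpar
    have h2n : ‖(2:ℝ)‖ = 2 := by norm_num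
    rw [h2n, norm_sub_rev w2 w1] at hpar
    have hz : ‖F m - m‖ = 0 := by
      nlinarith [hFm1, hFm2, norm_nonneg (F m - w1), norm_nonneg (F m - w2),
        norm_nonneg (F m - m), norm_nonneg (w1 - w2)]
    have := norm_eq_zero.mp hz
    have : F m = m := by
      have h := sub_eq_zero.mp this
      exact h
    exact this
  -- x := J (C m) is a fixed point of T with A x = m
  have hAx : A (J (C m)) = m := hFm
  have hxfix : J (C (A (J (C m)))) = J (C m) := by rw [hAx]
  -- minimality
  have e1 : A (u0 - u1) = A u0 - w1 := by simp [map_sub]; rfl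
  have e2 : A (u0 - u2) = A u0 - w2 := by simp [map_sub]; rfl
  have ex : A (u0 - J (C m)) = A u0 - m := by rw [map_sub, hAx]
  have hr12 : ‖A u0 - w1‖ = ‖A u0 - w2‖ := by
    have a := h1 u2 h2fix
    have b := h2 u1 h1fix
    rw [e1, e2] at a b
    linarith
  have hr1m : ‖A u0 - w1‖ ≤ ‖A u0 - m‖ := by
    have a := h1 (J (C m)) hxfix
    rwa [e1, ex] at a
  -- parallelogram forces w1 = w2
  have hw12 : w1 = w2 := by
    have hpar := parallelogram_law_with_norm ℝ (A u0 - w1) (A u0 - w2)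
    have f1 : (A u0 - w1) + (A u0 - w2) = (2:ℝ) • (A u0 - m) := by
      rw [hm]; module
    have f2 : (A u0 - w1) - (A u0 - w2) = w2 - w1 := by abel
    rw [f1, f2, norm_smul] at hpar
    have h2n : ‖(2:ℝ)‖ = 2 := by norm_num
    rw [h2n] at hpar
    have hz : ‖w2 - w1‖ = 0 := by
      nlinarith [hr12, hr1m, norm_nonneg (A u0 - w1), norm_nonneg (A u0 - m),
        norm_nonneg (w2 - w1)]
    have := norm_eq_zero.mp hz
    exact (sub_eq_zero.mp this).symm
  calc u1 = J (C w1) := h1fix.symm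
  _ = J (C w2) := by rw [hw12]
  _ = u2 := h2fix
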